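/- Let d, χ be positive integers, A : Fin d → Matrix (Fin χ) (Fin χ) ℂ a left-canonical MPS tensor with right fixed point ρ, and U ∈ Matrix (Fin d) (Fin d) ℂ unitary. Suppose v, w ∈ Matrix (Fin χ) (Fin χ) ℂ satisfy ‖v‖_ρ = 1, ‖w‖_ρ = 1, and T_U(v) = λ • w with |λ| = 1. Then: (a) the original transfer channel transports v onto w, i.e. ∑_t (A t)ᴴ * (vᴴ * v) * (A t) = wᴴ * w; and (b) for every unitary R ∈ Matrix (Fin d) (Fin d) ℂ with R * R = U there exists α ∈ ℂ with |α| = 1 such that for every index r, ∑_t (R r t) • (v * (A t)) = α • ∑_s (conj (R s r)) • ((A s) * w) (the weak push-through condition). -/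

import Mathlib

open Matrix BigOperators
open scoped ComplexOrder

/-- The ρ-weighted norm on χ×χ complex matrices: `‖v‖_ρ = √(Tr(vᴴ * v * ρ))`. -/
noncomputable def rhoNorm {χ : ℕ} (ρ v : Matrix (Fin χ) (Fin χ) ℂ) : ℝ :=
  Real.sqrt ((vᴴ * v * ρ).trace.re)

/-- The `U`-transfer map `T_U(v) = ∑_{s,t} U s t • ((A s)ᴴ * v * (A t))`. -/
noncomputable def transferMap {d χ : ℕ} (A : Fin d → Matrix (Fin χ) (Fin χ) ℂ)
    (U : Matrix (Fin d) (Fin d) ℂ) (v : Matrix (Fin χ) (Fin χ) ℂ) :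
    Matrix (Fin χ) (Fin χ) ℂ :=
  ∑ s, ∑ t, (U s t) • ((A s)ᴴ * v * (A t))

open scoped InnerProductSpace

section Aux

variable {d χ : ℕ}

open scoped MatrixOrder

/-- Trace identity through the square root of `ρ`. -/
lemma trace_sigma {σ ρ : Matrix (Fin χ) (Fin χ) ℂ} (hσH : σᴴ = σ) (hσ2 : σ * σ = ρ)
    (M N : Matrix (Fin χ) (Fin χ) ℂ) :
    ((M * σ)ᴴ * (N * σ)).trace = (Mᴴ * N * ρ).trace := by
  rw [conjTranspose_mul, hσH,
    show σ * Mᴴ * (N * σ) = σ * (Mᴴ * N) * σ by simp only [Matrix.mul_assoc],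
    Matrix.trace_mul_cycle, hσ2, Matrix.trace_mul_comm]

lemma trace_eq_one_of_rhoNorm {ρ : Matrix (Fin χ) (Fin χ) ℂ} (hρ : ρ.PosDef)
    {v : Matrix (Fin χ) (Fin χ) ℂ} (hv : rhoNorm ρ v = 1) :
    (vᴴ * v * ρ).trace = 1 := by
  have hσH : (CFC.sqrt ρ)ᴴ = CFC.sqrt ρ :=
    (CFC.sqrt_nonneg ρ).posSemidef.isHermitian
  have hσ2 : CFC.sqrt ρ * CFC.sqrt ρ = ρ := CFC.sqrt_mul_sqrt_self ρ hρ.posSemidef.nonneg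
  set σ := CFC.sqrt ρ
  set N := v * σ with hN
  have key : (vᴴ * v * ρ).trace = ((∑ j, ∑ i, Complex.normSq (N i j) : ℝ) : ℂ) := by
    rw [← trace_sigma hσH hσ2, Matrix.trace]
    push_cast
    refine Finset.sum_congr rfl fun j _ => ?_
    rw [Matrix.diag_apply, Matrix.mul_apply]
    refine Finset.sum_congr rfl fun i _ => ?_
    rw [Matrix.conjTranspose_apply, Complex.normSq_eq_conj_mul_self]
    rfl
  have hre : (vᴴ * v * ρ).trace.re = ∑ j, ∑ i, Complex.normSq (N i j) := by
    rw [key, Complex.ofReal_re]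
  have h1 : (vᴴ * v * ρ).trace.re = 1 := by
    have := hv
    rw [rhoNorm, Real.sqrt_eq_one] at this
    exact this
  rw [key, ← hre, h1, Complex.ofReal_one]

/-- Expansion of a "cross" sum against two coefficient matrices. -/
lemma sum_cross (V W : Matrix (Fin d) (Fin d) ℂ)
    (Y X : Fin d → Matrix (Fin χ) (Fin χ) ℂ) :
    ∑ r, (∑ s, V r s • Y s)ᴴ * (∑ t, W r t • X t)
      = ∑ s, ∑ t, ((Vᴴ * W) s t) • ((Y s)ᴴ * X t) := by
  have h1 : ∀ r, (∑ s, V r s • Y s)ᴴ * (∑ t, W r t • X t)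
      = ∑ s, ∑ t, (star (V r s) * W r t) • ((Y s)ᴴ * X t) := by
    intro r
    rw [Matrix.conjTranspose_sum, Finset.sum_mul]
    refine Finset.sum_congr rfl fun s _ => ?_
    rw [Finset.mul_sum]
    refine Finset.sum_congr rfl fun t _ => ?_
    rw [Matrix.conjTranspose_smul, Matrix.smul_mul, Matrix.mul_smul, smul_smul]
  rw [Finset.sum_congr rfl fun r _ => h1 r, Finset.sum_comm]
  refine Finset.sum_congr rfl fun s _ => ?_
  rw [Finset.sum_comm]
  refine Finset.sum_congr rfl fun t _ => ?_
  rw [← Finset.sum_smul]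
  congr 1

lemma delta_sum (f : Fin d → Fin d → Matrix (Fin χ) (Fin χ) ℂ) :
    ∑ s, ∑ t, ((1 : Matrix (Fin d) (Fin d) ℂ) s t) • f s t = ∑ t, f t t := by
  simp [Matrix.one_apply, ite_smul]

/-- Equality case of Cauchy–Schwarz in the ρ-weighted inner product on `d`-tuples of
matrices. -/
lemma cs_equality {ρ : Matrix (Fin χ) (Fin χ) ℂ} (hρ : ρ.PosDef)
    (P Q : Fin d → Matrix (Fin χ) (Fin χ) ℂ) {lam : ℂ} (hmod : ‖lam‖ = 1)
    (hP : ∑ r, ((P r)ᴴ * P r * ρ).trace = 1)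
    (hQ : ∑ r, ((Q r)ᴴ * Q r * ρ).trace = 1)
    (hPQ : ∑ r, ((Q r)ᴴ * P r * ρ).trace = lam) :
    ∀ r, P r = lam • Q r := by
  classical
  have hσH : (CFC.sqrt ρ)ᴴ = CFC.sqrt ρ :=
    (CFC.sqrt_nonneg ρ).posSemidef.isHermitian
  have hσ2 : CFC.sqrt ρ * CFC.sqrt ρ = ρ := CFC.sqrt_mul_sqrt_self ρ hρ.posSemidef.nonneg
  set σ := CFC.sqrt ρ
  set emb : (Fin d → Matrix (Fin χ) (Fin χ) ℂ) → EuclideanSpace ℂ (Fin d × Fin χ × Fin χ) :=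
    fun P => WithLp.toLp 2 (fun x : Fin d × Fin χ × Fin χ => (P x.1 * σ) x.2.1 x.2.2) with hemb
  have inner_emb : ∀ P' Q' : Fin d → Matrix (Fin χ) (Fin χ) ℂ,
      ⟪emb Q', emb P'⟫_ℂ = ∑ r, ((Q' r)ᴴ * P' r * ρ).trace := by
    intro P' Q'
    have htr : ∀ r, ((Q' r)ᴴ * P' r * ρ).trace
        = ∑ i, ∑ j, star ((Q' r * σ) i j) * ((P' r * σ) i j) := by
      intro r
      rw [← trace_sigma hσH hσ2, Matrix.trace,
        show (∑ i, ∑ j, star ((Q' r * σ) i j) * ((P' r * σ) i j))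
          = ∑ j, ∑ i, star ((Q' r * σ) i j) * ((P' r * σ) i j) from Finset.sum_comm]
      refine Finset.sum_congr rfl fun j _ => ?_
      rw [Matrix.diag_apply, Matrix.mul_apply]
      exact Finset.sum_congr rfl fun i _ => by rw [Matrix.conjTranspose_apply]
    calc ⟪emb Q', emb P'⟫_ℂ
        = ∑ x : Fin d × Fin χ × Fin χ, star (emb Q' x) * (emb P' x) := by
          simp only [PiLp.inner_apply, RCLike.inner_apply]
          exact Finset.sum_congr rfl fun x _ => mul_comm _ _
      _ = ∑ r, ∑ i, ∑ j, star ((Q' r * σ) i j) * ((P' r * σ) i j) := by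
          simp [Fintype.sum_prod_type, hemb]
      _ = ∑ r, ((Q' r)ᴴ * P' r * ρ).trace :=
          Finset.sum_congr rfl fun r _ => (htr r).symm
  have norm_of : ∀ P' : Fin d → Matrix (Fin χ) (Fin χ) ℂ,
      (∑ r, ((P' r)ᴴ * P' r * ρ).trace) = 1 → ‖emb P'‖ = 1 := by
    intro P' h
    have h5 : ⟪emb P', emb P'⟫_ℂ = 1 := by rw [inner_emb]; exact h
    have h4 : ‖emb P'‖ ^ 2 = 1 := by
      rw [← inner_self_eq_norm_sq (𝕜 := ℂ), h5]
      simp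
    rw [← Real.sqrt_sq (norm_nonneg (emb P')), h4, Real.sqrt_one]
  have hnP : ‖emb P‖ = 1 := norm_of P hP
  have hnQ : ‖emb Q‖ = 1 := norm_of Q hQ
  have hlamne : lam ≠ 0 := by
    intro h; rw [h] at hmod; simp at hmod
  have hinner : ⟪emb Q, lam⁻¹ • emb P⟫_ℂ = 1 := by
    rw [inner_smul_right, inner_emb, hPQ, inv_mul_cancel₀ hlamne]
  have hny : ‖lam⁻¹ • emb P‖ = 1 := by
    rw [norm_smul, hnP, mul_one, norm_inv, hmod, inv_one]
  have heq : emb Q = lam⁻¹ • emb P := (inner_eq_one_iff_of_norm_eq_one hnQ hny).mp hinner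
  have heq2 : emb P = lam • emb Q := by
    rw [heq, smul_smul, mul_inv_cancel₀ hlamne, one_smul]
  have hdet : IsUnit σ.det := by
    have h1 : σ.det * σ.det = ρ.det := by rw [← Matrix.det_mul, hσ2]
    have h2 : ρ.det ≠ 0 := hρ.det_pos.ne'
    refine isUnit_iff_ne_zero.mpr fun h => h2 ?_
    rw [← h1, h, mul_zero]
  intro r
  have hmul : P r * σ = (lam • Q r) * σ := by
    ext i j
    have h3 : (emb P) (r, i, j) = (lam • emb Q) (r, i, j) := by rw [heq2]
    simpa [hemb, Matrix.smul_mul, Matrix.smul_apply, smul_eq_mul, PiLp.smul_apply] using h3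
  calc P r = P r * σ * σ⁻¹ := by rw [Matrix.mul_nonsing_inv_cancel_right _ _ hdet]
    _ = lam • Q r := by rw [hmul, Matrix.mul_nonsing_inv_cancel_right _ _ hdet]

end Aux

/-- Saturation of the eigenvalue bound forces (a) transport of `vᴴv` onto `wᴴw` by the
ordinary transfer channel and (b) the weak push-through condition. -/
theorem transfer_saturation_weak_pushthrough {d χ : ℕ} (hd : 0 < d) (hχ : 0 < χ)
    (A : Fin d → Matrix (Fin χ) (Fin χ) ℂ)
    (hA : ∑ s, (A s)ᴴ * (A s) = 1)
    (ρ : Matrix (Fin χ) (Fin χ) ℂ) (hρ : ρ.PosDef)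
    (hfix : ∑ s, A s * ρ * (A s)ᴴ = ρ)
    (U : Matrix (Fin d) (Fin d) ℂ) (hU : U ∈ Matrix.unitaryGroup (Fin d) ℂ)
    (v w : Matrix (Fin χ) (Fin χ) ℂ)
    (hv : rhoNorm ρ v = 1) (hw : rhoNorm ρ w = 1)
    (lam : ℂ) (hlam : transferMap A U v = lam • w)
    (hmod : ‖lam‖ = 1) :
    (∑ t, (A t)ᴴ * (vᴴ * v) * (A t) = wᴴ * w) ∧
    (∀ R : Matrix (Fin d) (Fin d) ℂ, R ∈ Matrix.unitaryGroup (Fin d) ℂ → R * R = U →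
      ∃ α : ℂ, ‖α‖ = 1 ∧
        ∀ r : Fin d,
          ∑ t, (R r t) • (v * A t) =
            α • ∑ s, (starRingEnd ℂ (R s r)) • (A s * w)) := by
  classical
  have hU1 : Uᴴ * U = 1 := by
    have h := (Matrix.mem_unitaryGroup_iff').mp hU
    rwa [Matrix.star_eq_conjTranspose] at h
  have htrv : (vᴴ * v * ρ).trace = 1 := trace_eq_one_of_rhoNorm hρ hv
  have htrw : (wᴴ * w * ρ).trace = 1 := trace_eq_one_of_rhoNorm hρ hw
  set X : Fin d → Matrix (Fin χ) (Fin χ) ℂ := fun t => v * A t with hX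
  set Y : Fin d → Matrix (Fin χ) (Fin χ) ℂ := fun s => A s * w with hY
  -- trace of the X-family
  have hfixtr : ∀ M : Matrix (Fin χ) (Fin χ) ℂ,
      ∑ t, ((A t)ᴴ * M * A t * ρ).trace = (M * ρ).trace := by
    intro M
    have h1 : ∀ t, ((A t)ᴴ * M * A t * ρ).trace = (M * (A t * ρ * (A t)ᴴ)).trace := by
      intro t
      rw [show (A t)ᴴ * M * A t * ρ = (A t)ᴴ * M * (A t * ρ) by rw [Matrix.mul_assoc],
        Matrix.trace_mul_cycle, Matrix.trace_mul_comm]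
    calc ∑ t, ((A t)ᴴ * M * A t * ρ).trace
        = ∑ t, (M * (A t * ρ * (A t)ᴴ)).trace := Finset.sum_congr rfl fun t _ => h1 t
      _ = (M * ∑ t, (A t * ρ * (A t)ᴴ)).trace := by rw [Matrix.mul_sum, Matrix.trace_sum]
      _ = (M * ρ).trace := by rw [hfix]
  have hXXpt : ∀ t, (X t)ᴴ * X t = (A t)ᴴ * (vᴴ * v) * A t := by
    intro t
    simp [hX, Matrix.conjTranspose_mul, Matrix.mul_assoc]
  have hXXtr : ∑ t, ((X t)ᴴ * X t * ρ).trace = 1 := by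
    calc ∑ t, ((X t)ᴴ * X t * ρ).trace
        = ∑ t, ((A t)ᴴ * (vᴴ * v) * A t * ρ).trace :=
          Finset.sum_congr rfl fun t _ => by rw [hXXpt t]
      _ = ((vᴴ * v) * ρ).trace := hfixtr _
      _ = 1 := htrv
  have hYY : ∑ s, (Y s)ᴴ * Y s = wᴴ * w := by
    calc ∑ s, (Y s)ᴴ * Y s = ∑ s, wᴴ * ((A s)ᴴ * A s) * w := by
          refine Finset.sum_congr rfl fun s _ => ?_
          simp [hY, Matrix.conjTranspose_mul, Matrix.mul_assoc]
      _ = wᴴ * (∑ s, (A s)ᴴ * A s) * w := by rw [← Finset.sum_mul, ← Matrix.mul_sum]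
      _ = wᴴ * w := by rw [hA, Matrix.mul_one]
  have hYYtr : ∑ s, ((Y s)ᴴ * Y s * ρ).trace = 1 := by
    have h1 : ∑ s, ((Y s)ᴴ * Y s * ρ).trace = ((∑ s, (Y s)ᴴ * Y s) * ρ).trace := by
      rw [Finset.sum_mul, Matrix.trace_sum]
    rw [h1, hYY, htrw]
  -- the cross trace equals lam whenever Vᴴ * W = U
  have hcross : ∀ V W : Matrix (Fin d) (Fin d) ℂ, Vᴴ * W = U →
      ∑ r, ((∑ s, V r s • Y s)ᴴ * (∑ t, W r t • X t) * ρ).trace = lam := by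
    intro V W hVW
    have h1 : ∑ r, (∑ s, V r s • Y s)ᴴ * (∑ t, W r t • X t)
        = ∑ s, ∑ t, U s t • ((Y s)ᴴ * X t) := by rw [sum_cross, hVW]
    have h2 : ∑ s, ∑ t, U s t • ((Y s)ᴴ * X t) = wᴴ * transferMap A U v := by
      rw [transferMap, Matrix.mul_sum]
      refine Finset.sum_congr rfl fun s _ => ?_
      rw [Matrix.mul_sum]
      refine Finset.sum_congr rfl fun t _ => ?_
      rw [Matrix.mul_smul]
      congr 1
      simp [hY, hX, Matrix.conjTranspose_mul, Matrix.mul_assoc]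
    calc ∑ r, ((∑ s, V r s • Y s)ᴴ * (∑ t, W r t • X t) * ρ).trace
        = ((∑ r, (∑ s, V r s • Y s)ᴴ * (∑ t, W r t • X t)) * ρ).trace := by
          rw [Finset.sum_mul, Matrix.trace_sum]
      _ = ((wᴴ * transferMap A U v) * ρ).trace := by rw [h1, h2]
      _ = lam := by
          rw [hlam, Matrix.mul_smul, Matrix.smul_mul, Matrix.trace_smul, htrw,
            smul_eq_mul, mul_one]
  -- self-normalization for coefficient-rotated families
  have hself : ∀ V : Matrix (Fin d) (Fin d) ℂ, Vᴴ * V = 1 →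
      ∀ Z : Fin d → Matrix (Fin χ) (Fin χ) ℂ, (∑ t, ((Z t)ᴴ * Z t * ρ).trace = 1) →
      ∑ r, ((∑ t, V r t • Z t)ᴴ * (∑ t, V r t • Z t) * ρ).trace = 1 := by
    intro V hV Z hZ
    have h1 : ∑ r, (∑ t, V r t • Z t)ᴴ * (∑ t, V r t • Z t) = ∑ t, (Z t)ᴴ * Z t := by
      rw [sum_cross, hV, delta_sum]
    calc ∑ r, ((∑ t, V r t • Z t)ᴴ * (∑ t, V r t • Z t) * ρ).trace
        = ((∑ r, (∑ t, V r t • Z t)ᴴ * (∑ t, V r t • Z t)) * ρ).trace := by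
          rw [Finset.sum_mul, Matrix.trace_sum]
      _ = ((∑ t, (Z t)ᴴ * Z t) * ρ).trace := by rw [h1]
      _ = 1 := by rw [Finset.sum_mul, Matrix.trace_sum]; exact hZ
  have honeY : ∀ r, ∑ s, ((1 : Matrix (Fin d) (Fin d) ℂ) r s) • Y s = Y r := by
    intro r
    simp [Matrix.one_apply, ite_smul]
  have hstarlam : star lam * lam = 1 := by
    have h1 : (starRingEnd ℂ) lam * lam = ((Complex.normSq lam : ℝ) : ℂ) :=
      Complex.normSq_eq_conj_mul_self.symm
    have h2 : Complex.normSq lam = 1 := by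
      rw [Complex.normSq_eq_norm_sq, hmod, one_pow]
    rw [show star lam = (starRingEnd ℂ) lam from rfl, h1, h2, Complex.ofReal_one]
  constructor
  · -- part (a)
    have hPa := cs_equality hρ (fun s => ∑ t, U s t • X t)
      (fun r => ∑ s, ((1 : Matrix (Fin d) (Fin d) ℂ) r s) • Y s) hmod
      (hself U hU1 X hXXtr)
      (by
        refine Eq.trans (Finset.sum_congr rfl fun r _ => ?_) hYYtr
        simp only [honeY])
      (hcross 1 U (by rw [Matrix.conjTranspose_one, Matrix.one_mul]))
    have hPa' : ∀ s, ∑ t, U s t • X t = lam • Y s := by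
      intro s
      simpa only [honeY] using hPa s
    have h1 : ∑ s, (∑ t, U s t • X t)ᴴ * (∑ t, U s t • X t) = ∑ t, (X t)ᴴ * X t := by
      rw [sum_cross, hU1, delta_sum]
    calc ∑ t, (A t)ᴴ * (vᴴ * v) * A t
        = ∑ t, (X t)ᴴ * X t := Finset.sum_congr rfl fun t _ => (hXXpt t).symm
      _ = ∑ s, (∑ t, U s t • X t)ᴴ * (∑ t, U s t • X t) := h1.symm
      _ = ∑ s, (lam • Y s)ᴴ * (lam • Y s) := by
          refine Finset.sum_congr rfl fun s _ => ?_
          rw [hPa' s]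
      _ = ∑ s, (star lam * lam) • ((Y s)ᴴ * Y s) := by
          refine Finset.sum_congr rfl fun s _ => ?_
          rw [Matrix.conjTranspose_smul, Matrix.smul_mul, Matrix.mul_smul, smul_smul]
      _ = wᴴ * w := by
          rw [hstarlam]
          simp only [one_smul]
          exact hYY
  · -- part (b)
    intro R hR hR2
    have hR1 : Rᴴ * R = 1 := by
      have h := (Matrix.mem_unitaryGroup_iff').mp hR
      rwa [Matrix.star_eq_conjTranspose] at h
    have hR1' : R * Rᴴ = 1 := by
      have h := (Matrix.mem_unitaryGroup_iff).mp hR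
      rwa [Matrix.star_eq_conjTranspose] at h
    refine ⟨lam, hmod, ?_⟩
    have hPb := cs_equality hρ (fun r => ∑ t, R r t • X t)
      (fun r => ∑ s, Rᴴ r s • Y s) hmod
      (hself R hR1 X hXXtr)
      (hself Rᴴ (by rw [Matrix.conjTranspose_conjTranspose]; exact hR1') Y hYYtr)
      (hcross Rᴴ R (by rw [Matrix.conjTranspose_conjTranspose, hR2]))
    intro r
    have h := hPb r
    calc ∑ t, (R r t) • X t = lam • ∑ s, Rᴴ r s • Y s := h
      _ = lam • ∑ s, (starRingEnd ℂ (R s r)) • Y s := by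
          refine congrArg (lam • ·) (Finset.sum_congr rfl fun s _ => ?_)
          rw [Matrix.conjTranspose_apply]
          rfl
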